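/- arXiv:2510.21462 — 2 statements merged into one kernel-verified Lean document; each statement's English description precedes it below -/
import Mathlib

section
/- Let k ≥ 1 and c ≥ 1, and let 0 < ε < 1/2. Then the matrix M := (1 − 2ε)·S + ε·(I + J) on the index type Fin c × Fin k is invertible, and its inverse is M⁻¹ = λ₁⁻¹·M₁ + λ₂⁻¹·M₂ + λ₃⁻¹·M₃, where λ₁ := ε, λ₂ := (1 − 2ε)·k + ε, λ₃ := k·(1 − 2ε + ε·c) + ε, and M₁ := I − (1/k)·S, M₂ := (1/k)·S − (1/(kc))·J, M₃ := (1/(kc))·J. -/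
open Matrix Finset

/-- The all-ones matrix on `Fin c × Fin k`. -/
def Jmat (c k : ℕ) : Matrix (Fin c × Fin k) (Fin c × Fin k) ℝ :=
  Matrix.of fun _ _ => 1

/-- The block matrix `S = I_c ⊗ J_k`: `S ((a,p), (b,q)) = 1` iff `a = b`. -/
def Smat (c k : ℕ) : Matrix (Fin c × Fin k) (Fin c × Fin k) ℝ :=
  Matrix.of fun p q => if p.1 = q.1 then 1 else 0

/-- The projection `M₁ = I − (1/k) S`. -/
noncomputable def M1 (c k : ℕ) : Matrix (Fin c × Fin k) (Fin c × Fin k) ℝ :=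
  1 - ((k : ℝ))⁻¹ • Smat c k

/-- The projection `M₂ = (1/k) S − (1/(kc)) J`. -/
noncomputable def M2 (c k : ℕ) : Matrix (Fin c × Fin k) (Fin c × Fin k) ℝ :=
  ((k : ℝ))⁻¹ • Smat c k - ((k : ℝ) * (c : ℝ))⁻¹ • Jmat c k

/-- The projection `M₃ = (1/(kc)) J`. -/
noncomputable def M3 (c k : ℕ) : Matrix (Fin c × Fin k) (Fin c × Fin k) ℝ :=
  ((k : ℝ) * (c : ℝ))⁻¹ • Jmat c k

/-- The matrix `M = (1 − 2ε) S + ε (I + J)`. -/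
noncomputable def Mmat (c k : ℕ) (ε : ℝ) : Matrix (Fin c × Fin k) (Fin c × Fin k) ℝ :=
  (1 - 2 * ε) • Smat c k + ε • ((1 : Matrix (Fin c × Fin k) (Fin c × Fin k) ℝ) + Jmat c k)

lemma Smat_mul_Smat (c k : ℕ) : Smat c k * Smat c k = (k:ℝ) • Smat c k := by
  ext ⟨a,p⟩ ⟨b,q⟩
  simp [Matrix.mul_apply, Smat, Fintype.sum_prod_type, Finset.sum_ite_eq, mul_ite, ite_mul]
  split_ifs <;> simp

lemma Smat_mul_Jmat (c k : ℕ) : Smat c k * Jmat c k = (k:ℝ) • Jmat c k := by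
  ext ⟨a,p⟩ ⟨b,q⟩
  rw [Matrix.mul_apply, Fintype.sum_prod_type]
  simp [Smat, Jmat, apply_ite Finset.card, apply_ite (Nat.cast : ℕ → ℝ), Finset.sum_ite_eq]

lemma Jmat_mul_Smat (c k : ℕ) : Jmat c k * Smat c k = (k:ℝ) • Jmat c k := by
  ext ⟨a,p⟩ ⟨b,q⟩
  rw [Matrix.mul_apply, Fintype.sum_prod_type]
  simp [Smat, Jmat, apply_ite Finset.card, apply_ite (Nat.cast : ℕ → ℝ), Finset.sum_ite_eq']

lemma Jmat_mul_Jmat (c k : ℕ) : Jmat c k * Jmat c k = ((k:ℝ)*(c:ℝ)) • Jmat c k := by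
  ext ⟨a,p⟩ ⟨b,q⟩
  simp [Matrix.mul_apply, Jmat, Fintype.sum_prod_type, mul_comm]

/-- For `0 < ε < 1/2`, the matrix `M` is invertible, with inverse
`M⁻¹ = λ₁⁻¹ M₁ + λ₂⁻¹ M₂ + λ₃⁻¹ M₃`. -/
theorem Mmat_invertible_and_inverse {c k : ℕ} (hk : 1 ≤ k) (hc : 1 ≤ c)
    (ε : ℝ) (hε0 : 0 < ε) (hε : ε < 1 / 2) :
    IsUnit (Mmat c k ε) ∧
    (Mmat c k ε)⁻¹
      = ε⁻¹ • M1 c k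
        + ((1 - 2 * ε) * (k : ℝ) + ε)⁻¹ • M2 c k
        + ((k : ℝ) * (1 - 2 * ε + ε * (c : ℝ)) + ε)⁻¹ • M3 c k := by
  have hk' : (0:ℝ) < (k:ℝ) := by exact_mod_cast hk
  have hc' : (0:ℝ) < (c:ℝ) := by exact_mod_cast hc
  have ha : (0:ℝ) < 1 - 2 * ε := by linarith
  have hl2 : (0:ℝ) < (1 - 2 * ε) * (k:ℝ) + ε := by positivity
  have hc1 : (1:ℝ) ≤ (c:ℝ) := by exact_mod_cast hc
  have h1 : (0:ℝ) < 1 - 2 * ε + ε * (c:ℝ) := by nlinarith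
  have hl3 : (0:ℝ) < (k:ℝ) * (1 - 2 * ε + ε * (c:ℝ)) + ε := by
    have := mul_pos hk' h1; linarith
  have hMN : Mmat c k ε *
      (ε⁻¹ • M1 c k
        + ((1 - 2 * ε) * (k : ℝ) + ε)⁻¹ • M2 c k
        + ((k : ℝ) * (1 - 2 * ε + ε * (c : ℝ)) + ε)⁻¹ • M3 c k) = 1 := by
    simp only [Mmat, M1, M2, M3, Matrix.add_mul, Matrix.mul_add, Matrix.mul_sub, Matrix.sub_mul,
      Matrix.smul_mul, Matrix.mul_smul, Matrix.one_mul, Matrix.mul_one,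
      Smat_mul_Smat, Smat_mul_Jmat, Jmat_mul_Smat, Jmat_mul_Jmat,
      smul_smul, smul_add, smul_sub]
    rw [show (1 : Matrix (Fin c × Fin k) (Fin c × Fin k) ℝ)
        = (1:ℝ) • 1 + (0:ℝ) • Smat c k + (0:ℝ) • Jmat c k by simp]
    match_scalars
    · generalize hA : ((1 - 2 * ε) * (k:ℝ) + ε) = A at hl2; generalize hB : ((k:ℝ) * (1 - 2 * ε + ε * (c:ℝ)) + ε) = B at hl3; field_simp; linear_combination ε * hA
    · field_simp
    · generalize hA : ((1 - 2 * ε) * (k:ℝ) + ε) = A at hl2; generalize hB : ((k:ℝ) * (1 - 2 * ε + ε * (c:ℝ)) + ε) = B at hl3; field_simp; linear_combination A * hB - B * hA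
  have hinv := invertibleOfRightInverse _ _ hMN
  exact ⟨isUnit_of_invertible _, Matrix.inv_eq_right_inv hMN⟩
end

section
/- Let k ≥ 1, c ≥ 1, and 0 < ε < 1/2, so that M := (1 − 2ε)·S + ε·(I + J) on the index type Fin c × Fin k is invertible. Then the exact deviation of M⁻² from ε⁻¹·M⁻¹ is supported on the projections M₂ and M₃: M⁻² − ε⁻¹·M⁻¹ = λ₂⁻¹·(λ₂⁻¹ − ε⁻¹)·M₂ + λ₃⁻¹·(λ₃⁻¹ − ε⁻¹)·M₃, where λ₂ := (1 − 2ε)·k + ε, λ₃ := k·(1 − 2ε + ε·c) + ε, M₂ := (1/k)·S − (1/(kc))·J, and M₃ := (1/(kc))·J. -/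
open Matrix Finset

lemma SS (c k : ℕ) : Smat c k * Smat c k = (k : ℝ) • Smat c k := by
  ext ⟨a,p⟩ ⟨b,q⟩
  simp only [Matrix.mul_apply, Smat, Matrix.of_apply, Fintype.sum_prod_type, ite_mul, one_mul,
    zero_mul, Finset.sum_ite_eq, Finset.mem_univ, if_true, Matrix.smul_apply, smul_eq_mul]
  simp [apply_ite Finset.card, mul_comm]

lemma JJ (c k : ℕ) : Jmat c k * Jmat c k = ((k : ℝ) * c) • Jmat c k := by
  ext ⟨a,p⟩ ⟨b,q⟩
  simp [Matrix.mul_apply, Jmat, Fintype.sum_prod_type, mul_comm]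

lemma SJ (c k : ℕ) : Smat c k * Jmat c k = (k : ℝ) • Jmat c k := by
  ext ⟨a,p⟩ ⟨b,q⟩
  simp only [Matrix.mul_apply, Smat, Jmat, Matrix.of_apply, Fintype.sum_prod_type, mul_one,
    Finset.sum_const, Finset.card_univ, Fintype.card_fin, nsmul_eq_mul, Matrix.smul_apply, smul_eq_mul]
  simp [apply_ite Finset.card, Finset.sum_ite_eq, mul_comm]

lemma JS (c k : ℕ) : Jmat c k * Smat c k = (k : ℝ) • Jmat c k := by
  ext ⟨a,p⟩ ⟨b,q⟩
  simp only [Matrix.mul_apply, Smat, Jmat, Matrix.of_apply, Fintype.sum_prod_type, one_mul,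
    Finset.sum_const, Finset.card_univ, Fintype.card_fin, nsmul_eq_mul, Matrix.smul_apply, smul_eq_mul]
  simp [apply_ite Finset.card, Finset.sum_ite_eq', mul_comm]

set_option maxHeartbeats 1000000 in
/-- For `0 < ε < 1/2`, the exact deviation of `M⁻²` from `ε⁻¹ M⁻¹` is supported on
the projections `M₂` and `M₃`. -/
theorem Mmat_inv_sq_deviation {c k : ℕ} (hk : 1 ≤ k) (hc : 1 ≤ c)
    (ε : ℝ) (hε0 : 0 < ε) (hε : ε < 1 / 2) :
    (Mmat c k ε)⁻¹ * (Mmat c k ε)⁻¹ - ε⁻¹ • (Mmat c k ε)⁻¹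
      = (((1 - 2 * ε) * (k : ℝ) + ε)⁻¹ * (((1 - 2 * ε) * (k : ℝ) + ε)⁻¹ - ε⁻¹)) • M2 c k
        + (((k : ℝ) * (1 - 2 * ε + ε * (c : ℝ)) + ε)⁻¹
            * (((k : ℝ) * (1 - 2 * ε + ε * (c : ℝ)) + ε)⁻¹ - ε⁻¹)) • M3 c k := by
  have hkR : (1 : ℝ) ≤ (k : ℝ) := by exact_mod_cast hk
  have hcR : (1 : ℝ) ≤ (c : ℝ) := by exact_mod_cast hc
  have hk0 : (k : ℝ) ≠ 0 := by linarith
  have hc0 : (c : ℝ) ≠ 0 := by linarith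
  have hεne : ε ≠ 0 := hε0.ne'
  obtain ⟨l2, hl2⟩ : ∃ l2 : ℝ, l2 = (1 - 2 * ε) * (k : ℝ) + ε := ⟨_, rfl⟩
  obtain ⟨l3, hl3⟩ : ∃ l3 : ℝ, l3 = (k : ℝ) * (1 - 2 * ε + ε * (c : ℝ)) + ε := ⟨_, rfl⟩
  have hL2 : l2 ≠ 0 := by rw [hl2]; nlinarith
  have hL3 : l3 ≠ 0 := by
    rw [hl3]
    nlinarith [mul_pos (show (0:ℝ) < (k:ℝ) by linarith)
      (show (0:ℝ) < 1 - 2 * ε + ε * (c : ℝ) by nlinarith)]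
  obtain ⟨N, hN⟩ : ∃ N : Matrix (Fin c × Fin k) (Fin c × Fin k) ℝ,
      N = ε⁻¹ • (1 : Matrix (Fin c × Fin k) (Fin c × Fin k) ℝ)
        + ((k : ℝ)⁻¹ * (l2⁻¹ - ε⁻¹)) • Smat c k
        + (((k : ℝ) * (c : ℝ))⁻¹ * (l3⁻¹ - l2⁻¹)) • Jmat c k := ⟨_, rfl⟩
  have hMN : Mmat c k ε * N = 1 := by
    rw [Mmat, hN]
    simp only [smul_add, add_mul, mul_add, smul_mul_assoc, mul_smul_comm, SS, JJ, SJ, JS,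
      one_mul, mul_one, smul_smul]
    match_scalars <;> field_simp <;> simp only [hl2, hl3] <;> ring
  have hinv : (Mmat c k ε)⁻¹ = N := Matrix.inv_eq_right_inv hMN
  rw [hinv, hN, M2, M3, ← hl2, ← hl3]
  simp only [smul_add, add_mul, mul_add, smul_mul_assoc, mul_smul_comm, SS, JJ, SJ, JS,
    one_mul, mul_one, smul_smul, smul_sub]
  match_scalars <;> field_simp <;> subst hl2 hl3 <;> ring
end
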